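/- Let F : ℝ → ℝ be continuous, nonnegative and nonincreasing, and let N ≥ 2. For δ_1 > 0 define recursively x_0 = 0, x_1 = -δ_1, f_1 = δ_1^{-2}, and for k = 1, ..., N-1: f_{k+1} = f_k - F(x_k), δ_{k+1} = f_{k+1}^{-1/2}, x_{k+1} = x_k - δ_{k+1}, on the set of δ_1 for which f_1, ..., f_N are all positive. Then on this set, for each k = 1, ..., N, the quantity f_k is a strictly decreasing function of δ_1, while δ_k and -x_k are strictly increasing functions of δ_1. Moreover, as δ_1 → 0+, f_k → ∞ and δ_k → 0 and x_k → 0 for every k. -/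

import Mathlib

/-- The pair `(f (k+1), x k)` of the configuration determined by the first gap
`d = δ 1`: starting from `f 1 = d⁻²`, `x 0 = 0`, one recursively sets
`δ k = (f k)^(-1/2)`, `x k = x (k-1) - δ k`, `f (k+1) = f k - F (x k)`. -/
noncomputable def fxPair (F : ℝ → ℝ) (d : ℝ) : ℕ → ℝ × ℝ
  | 0 => (d⁻¹ ^ 2, 0)
  | k + 1 =>
      let p := fxPair F d k
      (p.1 - F (p.2 - (Real.sqrt p.1)⁻¹), p.2 - (Real.sqrt p.1)⁻¹)

/-- `fk F d k = f k`, the inverse square of the `k`-th gap, as a function of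
the first gap `d = δ 1` (meaningful for `k ≥ 1`). -/
noncomputable def fk (F : ℝ → ℝ) (d : ℝ) (k : ℕ) : ℝ := (fxPair F d (k - 1)).1

/-- `xk F d k = x k`, the position of the `k`-th particle, as a function of
the first gap `d = δ 1`; in particular `xk F d 0 = 0`. -/
noncomputable def xk (F : ℝ → ℝ) (d : ℝ) (k : ℕ) : ℝ := (fxPair F d k).2

/-- `dk F d k = δ k = (f k)^(-1/2)`, the `k`-th gap, as a function of the
first gap `d = δ 1`. -/
noncomputable def dk (F : ℝ → ℝ) (d : ℝ) (k : ℕ) : ℝ := (Real.sqrt (fk F d k))⁻¹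

/-- The set of admissible first gaps `d = δ 1 > 0`, namely those for which
`f 1, ..., f N` are all positive. -/
def admissible (F : ℝ → ℝ) (N : ℕ) : Set ℝ :=
  {d : ℝ | 0 < d ∧ ∀ k, 1 ≤ k → k ≤ N → 0 < fk F d k}

lemma fxPair_succ_fst (F : ℝ → ℝ) (d : ℝ) (n : ℕ) :
    (fxPair F d (n + 1)).1
      = (fxPair F d n).1 - F ((fxPair F d n).2 - (Real.sqrt (fxPair F d n).1)⁻¹) := rfl

lemma fxPair_succ_snd (F : ℝ → ℝ) (d : ℝ) (n : ℕ) :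
    (fxPair F d (n + 1)).2 = (fxPair F d n).2 - (Real.sqrt (fxPair F d n).1)⁻¹ := rfl

lemma fk_succ_eq (F : ℝ → ℝ) (d : ℝ) (n : ℕ) :
    fk F d (n + 2) = fk F d (n + 1) - F (xk F d (n + 1)) := rfl

lemma xk_succ_eq (F : ℝ → ℝ) (d : ℝ) (n : ℕ) :
    xk F d (n + 1) = xk F d n - (Real.sqrt (fk F d (n + 1)))⁻¹ := rfl

lemma fk_one (F : ℝ → ℝ) (d : ℝ) : fk F d 1 = d⁻¹ ^ 2 := rfl

lemma xk_one (F : ℝ → ℝ) (d : ℝ) (hd : 0 < d) : xk F d 1 = -d := by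
  have h : Real.sqrt (d⁻¹ ^ 2) = d⁻¹ := Real.sqrt_sq (by positivity)
  show (0 : ℝ) - (Real.sqrt (d⁻¹ ^ 2))⁻¹ = -d
  rw [h, inv_inv]; ring

/-- Key monotonicity: for admissible `d1 < d2`, `f k` decreases and `x k`
decreases strictly. -/
lemma mono_aux (F : ℝ → ℝ) (hFanti : Antitone F) (N : ℕ)
    {d1 d2 : ℝ} (h1 : d1 ∈ admissible F N) (h2 : d2 ∈ admissible F N)
    (h12 : d1 < d2) :
    ∀ n, 1 ≤ n → n ≤ N → fk F d2 n < fk F d1 n ∧ xk F d2 n < xk F d1 n := by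
  intro n
  induction n with
  | zero => omega
  | succ n ih =>
    intro _ hle
    match n, ih with
    | 0, _ =>
      constructor
      · rw [fk_one, fk_one]
        have hd1 : 0 < d1 := h1.1
        have hd2 : 0 < d2 := h2.1
        exact pow_lt_pow_left₀ (inv_strictAnti₀ hd1 h12) (by positivity) (by norm_num)
      · rw [xk_one F d1 h1.1, xk_one F d2 h2.1]; linarith
    | m + 1, ih =>
      have hle' : m + 1 ≤ N := by omega
      obtain ⟨hf, hx⟩ := ih (by omega) hle'
      have hf2pos : 0 < fk F d2 (m + 2) := h2.2 (m + 2) (by omega) hle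
      have hf1pos : 0 < fk F d1 (m + 2) := h1.2 (m + 2) (by omega) hle
      have hfsucc : fk F d2 (m + 2) < fk F d1 (m + 2) := by
        rw [fk_succ_eq, fk_succ_eq]
        have hF := hFanti hx.le
        linarith
      refine ⟨hfsucc, ?_⟩
      rw [xk_succ_eq F d1 (m + 1), xk_succ_eq F d2 (m + 1)]
      have hsq : Real.sqrt (fk F d2 (m + 2)) < Real.sqrt (fk F d1 (m + 2)) :=
        Real.sqrt_lt_sqrt hf2pos.le hfsucc
      have hsq2 : 0 < Real.sqrt (fk F d2 (m + 2)) := Real.sqrt_pos.2 hf2pos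
      have hinv : (Real.sqrt (fk F d1 (m + 2)))⁻¹ < (Real.sqrt (fk F d2 (m + 2)))⁻¹ := by
        exact inv_strictAnti₀ hsq2 hsq
      linarith

lemma sqrt_tendsto_atTop : Filter.Tendsto Real.sqrt Filter.atTop Filter.atTop := by
  apply Filter.tendsto_atTop_atTop.2
  intro b
  refine ⟨b ^ 2, fun a ha => ?_⟩
  calc b ≤ |b| := le_abs_self b
    _ = Real.sqrt (b ^ 2) := (Real.sqrt_sq_eq_abs b).symm
    _ ≤ Real.sqrt a := Real.sqrt_le_sqrt ha

/-- Limits as the first gap tends to `0⁺`. -/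
lemma tendsto_aux (F : ℝ → ℝ) (hFcont : Continuous F) :
    ∀ n, Filter.Tendsto (fun d => (fxPair F d n).1) (nhdsWithin 0 (Set.Ioi 0))
        Filter.atTop ∧
      Filter.Tendsto (fun d => (fxPair F d n).2) (nhdsWithin 0 (Set.Ioi 0)) (nhds 0) := by
  intro n
  induction n with
  | zero =>
    constructor
    · have h := tendsto_inv_nhdsGT_zero (𝕜 := ℝ)
      have h2 := h.atTop_mul_atTop₀ h
      show Filter.Tendsto (fun d : ℝ => d⁻¹ ^ 2) _ _
      simpa [pow_two] using h2
    · simpa [fxPair] using tendsto_const_nhds (α := ℝ) (x := (0 : ℝ))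
  | succ n ih =>
    obtain ⟨h1, h2⟩ := ih
    have hδ : Filter.Tendsto (fun d => (Real.sqrt (fxPair F d n).1)⁻¹)
        (nhdsWithin 0 (Set.Ioi 0)) (nhds 0) :=
      (sqrt_tendsto_atTop.comp h1).inv_tendsto_atTop
    have hx : Filter.Tendsto (fun d => (fxPair F d (n + 1)).2)
        (nhdsWithin 0 (Set.Ioi 0)) (nhds 0) := by
      have := h2.sub hδ
      simpa [fxPair_succ_snd] using this
    refine ⟨?_, hx⟩
    have hFx : Filter.Tendsto (fun d => -F ((fxPair F d (n + 1)).2))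
        (nhdsWithin 0 (Set.Ioi 0)) (nhds (-F 0)) :=
      ((hFcont.tendsto 0).comp hx).neg
    have := h1.atTop_add hFx
    apply this.congr
    intro d
    rw [fxPair_succ_fst, ← fxPair_succ_snd]
    ring

/-- For `F` continuous, nonnegative and nonincreasing, and
`N ≥ 2`: on the set of admissible first gaps, each `f k` is a strictly
decreasing function of `δ 1`, while `δ k` and `-x k` are strictly increasing
functions of `δ 1`; moreover, as `δ 1 → 0⁺`, `f k → ∞`, `δ k → 0` and
`x k → 0` for every `k = 1, ..., N`. -/
theorem monotonicity_in_first_gap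
    (F : ℝ → ℝ) (hFcont : Continuous F) (hFnonneg : ∀ z, 0 ≤ F z)
    (hFanti : Antitone F) (N : ℕ) (hN : 2 ≤ N) :
    (∀ k, 1 ≤ k → k ≤ N →
      StrictAntiOn (fun d => fk F d k) (admissible F N) ∧
      StrictMonoOn (fun d => dk F d k) (admissible F N) ∧
      StrictMonoOn (fun d => -xk F d k) (admissible F N)) ∧
    (∀ k, 1 ≤ k → k ≤ N →
      Filter.Tendsto (fun d => fk F d k) (nhdsWithin 0 (Set.Ioi 0))
        Filter.atTop ∧
      Filter.Tendsto (fun d => dk F d k) (nhdsWithin 0 (Set.Ioi 0))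
        (nhds 0) ∧
      Filter.Tendsto (fun d => xk F d k) (nhdsWithin 0 (Set.Ioi 0))
        (nhds 0)) := by
  constructor
  · intro k hk1 hkN
    refine ⟨?_, ?_, ?_⟩
    · intro d1 h1 d2 h2 h12
      exact (mono_aux F hFanti N h1 h2 h12 k hk1 hkN).1
    · intro d1 h1 d2 h2 h12
      have hf := (mono_aux F hFanti N h1 h2 h12 k hk1 hkN).1
      have hf2pos : 0 < fk F d2 k := h2.2 k hk1 hkN
      have hsq : Real.sqrt (fk F d2 k) < Real.sqrt (fk F d1 k) :=
        Real.sqrt_lt_sqrt hf2pos.le hf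
      have hsq2 : 0 < Real.sqrt (fk F d2 k) := Real.sqrt_pos.2 hf2pos
      exact inv_strictAnti₀ hsq2 hsq
    · intro d1 h1 d2 h2 h12
      have hx := (mono_aux F hFanti N h1 h2 h12 k hk1 hkN).2
      simpa using neg_lt_neg hx
  · intro k hk1 hkN
    obtain ⟨hf, _⟩ := tendsto_aux F hFcont (k - 1)
    obtain ⟨_, hx⟩ := tendsto_aux F hFcont k
    refine ⟨hf, ?_, hx⟩
    exact (sqrt_tendsto_atTop.comp hf).inv_tendsto_atTop
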